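/- arXiv:math/0201040 — 4 statements merged into one kernel-verified Lean document; each statement's English description precedes it below -/
import Mathlib

section
/- Let n ≥ 1, let X be a domain (nonempty open connected set) in ℂⁿ and let z ∈ X. Let Q \ P_z denote the subspace of ℙⁿ(ℂ) × X consisting of pairs ([ξ], x) such that ξ·x = 0 and ξ·z ≠ 0, where for ξ = (ξ₀,…,ξₙ) ∈ ℂ^{n+1}\{0} and w ∈ ℂⁿ we write ξ·w = ξ₀ + ξ₁w₁ + … + ξₙwₙ. Then the restriction to Q \ P_z of the projection ℙⁿ(ℂ) × X → X is a continuous map onto X \ {z} which is a homotopy equivalence. -/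
open LinearAlgebra.Projectivization Projectivization

/-- Quotient topology on the projectivization of a topological vector space. -/
noncomputable instance projectivizationTopology {K V : Type*} [DivisionRing K] [AddCommGroup V]
    [Module K V] [TopologicalSpace V] : TopologicalSpace (ℙ K V) :=
  inferInstanceAs (TopologicalSpace (Quotient (projectivizationSetoid K V)))

/-- `ξ·w = ξ₀ + ξ₁w₁ + ⋯ + ξₙwₙ` for `ξ ∈ ℂ^{n+1}` and `w ∈ ℂⁿ`. -/
noncomputable def lerayDot {n : ℕ} (ξ : Fin (n + 1) → ℂ) (w : Fin n → ℂ) : ℂ :=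
  ξ 0 + ∑ i : Fin n, ξ i.succ * w i

/-! ### Auxiliary lemmas -/

namespace LerayAux

variable {n : ℕ}

lemma lerayDot_smul (c : ℂ) (ξ : Fin (n+1) → ℂ) (w : Fin n → ℂ) :
    lerayDot (c • ξ) w = c * lerayDot ξ w := by
  simp [lerayDot, Finset.mul_sum, mul_add, mul_assoc]

lemma lerayDot_add (ξ η : Fin (n+1) → ℂ) (w : Fin n → ℂ) :
    lerayDot (ξ + η) w = lerayDot ξ w + lerayDot η w := by
  simp [lerayDot, add_mul, Finset.sum_add_distrib]; ring

lemma lerayDot_zero (w : Fin n → ℂ) : lerayDot (0 : Fin (n+1) → ℂ) w = 0 := by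
  simp [lerayDot]

lemma continuous_lerayDot (w : Fin n → ℂ) :
    Continuous fun ξ : Fin (n+1) → ℂ => lerayDot ξ w := by
  unfold lerayDot; fun_prop

lemma exists_rep_eq (ξ : Fin (n+1) → ℂ) (hξ : ξ ≠ 0) :
    ∃ c : ℂ, c ≠ 0 ∧ (Projectivization.mk ℂ ξ hξ).rep = c • ξ := by
  obtain ⟨a, ha⟩ := exists_smul_eq_mk_rep ℂ ξ hξ
  exact ⟨a, a.ne_zero, by rw [← ha]; rfl⟩

lemma lerayDot_rep_mk_zero_iff (ξ : Fin (n+1) → ℂ) (hξ : ξ ≠ 0) (w : Fin n → ℂ) :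
    lerayDot (Projectivization.mk ℂ ξ hξ).rep w = 0 ↔ lerayDot ξ w = 0 := by
  obtain ⟨c, hc, h⟩ := exists_rep_eq ξ hξ
  rw [h, lerayDot_smul, mul_eq_zero]
  simp [hc]

/-- `mk'` is an open map. -/
lemma isOpenMap_mk' :
    IsOpenMap (Projectivization.mk' ℂ : {v : Fin (n+1) → ℂ // v ≠ 0} → ℙ ℂ (Fin (n+1) → ℂ)) := by
  letI : Setoid {v : Fin (n+1) → ℂ // v ≠ 0} := projectivizationSetoid ℂ (Fin (n+1) → ℂ)
  intro U hU
  obtain ⟨U₀, hU₀, rfl⟩ := isOpen_induced_iff.mp hU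
  show IsOpen (X := Quotient (projectivizationSetoid ℂ (Fin (n+1) → ℂ)))
      (Projectivization.mk' ℂ '' (Subtype.val ⁻¹' U₀))
  rw [← isQuotientMap_quotient_mk'.isOpen_preimage]
  have hset : (Quotient.mk' : {v : Fin (n+1) → ℂ // v ≠ 0} →
        Quotient (projectivizationSetoid ℂ (Fin (n+1) → ℂ))) ⁻¹'
        (Projectivization.mk' ℂ '' (Subtype.val ⁻¹' U₀)) =
      Subtype.val ⁻¹' (⋃ c : ℂˣ, (fun v => (c : ℂ) • v) '' (U₀ ∩ {v | v ≠ 0})) := by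
    ext ⟨v, hv⟩
    simp only [Set.mem_preimage, Set.mem_image, Set.mem_iUnion, Set.mem_inter_iff, Set.mem_setOf_eq]
    constructor
    · rintro ⟨⟨u, hu⟩, hu0, heq⟩
      have h1 : Projectivization.mk ℂ u hu = Projectivization.mk ℂ v hv := heq
      obtain ⟨a, ha⟩ := (mk_eq_mk_iff ℂ u v hu hv).mp h1
      refine ⟨a⁻¹, u, ⟨hu0, hu⟩, ?_⟩
      rw [← ha]
      simp [Units.smul_def, smul_smul, Units.inv_mul]
    · rintro ⟨c, u, ⟨hu0, hu⟩, heq⟩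
      refine ⟨⟨u, hu⟩, hu0, ?_⟩
      show Projectivization.mk ℂ u hu = Projectivization.mk ℂ v hv
      exact ((mk_eq_mk_iff ℂ v u hv hu).mpr ⟨c, heq⟩).symm
  rw [hset]
  refine (isOpen_iUnion fun c => ?_).preimage continuous_subtype_val
  exact (isOpenMap_smul₀ (G₀ := ℂ) c.ne_zero) _
    (hU₀.inter (isOpen_compl_singleton (x := (0 : Fin (n+1) → ℂ))))

lemma continuous_mk' :
    Continuous (Projectivization.mk' ℂ : {v : Fin (n+1) → ℂ // v ≠ 0} → ℙ ℂ (Fin (n+1) → ℂ)) := by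
  letI : Setoid {v : Fin (n+1) → ℂ // v ≠ 0} := projectivizationSetoid ℂ (Fin (n+1) → ℂ)
  exact continuous_quotient_mk'

variable (z : Fin n → ℂ)

/-- Normalized representative. -/
noncomputable def normC (p : ℙ ℂ (Fin (n+1) → ℂ)) : Fin (n+1) → ℂ :=
  (lerayDot p.rep z)⁻¹ • p.rep

lemma normC_mk (ξ : Fin (n+1) → ℂ) (hξ : ξ ≠ 0) (hd : lerayDot ξ z ≠ 0) :
    normC z (Projectivization.mk ℂ ξ hξ) = (lerayDot ξ z)⁻¹ • ξ := by
  obtain ⟨c, hc, h⟩ := exists_rep_eq ξ hξ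
  rw [normC, h, lerayDot_smul, smul_smul]
  congr 1
  field_simp

lemma normC_dot_z (p : ℙ ℂ (Fin (n+1) → ℂ)) (h : lerayDot p.rep z ≠ 0) :
    lerayDot (normC z p) z = 1 := by
  rw [normC, lerayDot_smul, inv_mul_cancel₀ h]

lemma normC_dot (p : ℙ ℂ (Fin (n+1) → ℂ)) (w : Fin n → ℂ) (h0 : lerayDot p.rep w = 0) :
    lerayDot (normC z p) w = 0 := by
  rw [normC, lerayDot_smul, h0, mul_zero]

lemma continuousOn_normC :
    ContinuousOn (normC z) {p : ℙ ℂ (Fin (n+1) → ℂ) | lerayDot p.rep z ≠ 0} := by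
  rw [continuousOn_iff']
  intro t ht
  set L : (Fin (n+1) → ℂ) → (Fin (n+1) → ℂ) := fun ξ => (lerayDot ξ z)⁻¹ • ξ with hL
  have hS₀ : IsOpen {ξ : Fin (n+1) → ℂ | lerayDot ξ z ≠ 0} :=
    isOpen_ne.preimage (continuous_lerayDot z)
  have hLcont : ContinuousOn L {ξ | lerayDot ξ z ≠ 0} :=
    (((continuous_lerayDot z).continuousOn.inv₀ fun x hx => hx).smul continuousOn_id)
  obtain ⟨O, hO, hOeq⟩ := (continuousOn_iff'.mp hLcont) t ht
  set A : Set (Fin (n+1) → ℂ) := O ∩ {ξ | lerayDot ξ z ≠ 0} with hA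
  have hAopen : IsOpen A := hO.inter hS₀
  have hAeq : L ⁻¹' t ∩ {ξ | lerayDot ξ z ≠ 0} = A := hOeq
  refine ⟨Projectivization.mk' ℂ '' (Subtype.val ⁻¹' A),
    isOpenMap_mk' _ (hAopen.preimage continuous_subtype_val), ?_⟩
  ext p
  simp only [Set.mem_inter_iff, Set.mem_preimage, Set.mem_image, Set.mem_setOf_eq]
  constructor
  · rintro ⟨hpt, hpz⟩
    refine ⟨⟨⟨p.rep, p.rep_nonzero⟩, ?_, ?_⟩, hpz⟩
    · show p.rep ∈ A
      rw [← hAeq]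
      exact ⟨hpt, hpz⟩
    · show Projectivization.mk ℂ p.rep p.rep_nonzero = p
      exact mk_rep p
  · rintro ⟨⟨⟨ξ, hξ⟩, hξA, rfl⟩, hpz⟩
    have hξA' : (ξ : Fin (n+1) → ℂ) ∈ A := hξA
    rw [← hAeq] at hξA'
    obtain ⟨hξt, hξz⟩ := hξA'
    refine ⟨?_, hpz⟩
    show normC z (Projectivization.mk ℂ ξ hξ) ∈ t
    rw [normC_mk z ξ hξ hξz]
    exact hξt

/-- The section hyperplane: `lsec z x · w = ∑ conj (x i - z i) * (w i - x i)`. -/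
noncomputable def lsec (x : Fin n → ℂ) : Fin (n+1) → ℂ :=
  Fin.cons (-∑ i, (starRingEnd ℂ) (x i - z i) * x i) (fun i => (starRingEnd ℂ) (x i - z i))

lemma lerayDot_lsec (x w : Fin n → ℂ) :
    lerayDot (lsec z x) w = ∑ i, (starRingEnd ℂ) (x i - z i) * (w i - x i) := by
  simp [lerayDot, lsec, mul_sub, Finset.sum_sub_distrib]
  ring

lemma lerayDot_lsec_self (x : Fin n → ℂ) : lerayDot (lsec z x) x = 0 := by
  simp [lerayDot_lsec]

lemma lerayDot_lsec_z (x : Fin n → ℂ) (hx : x ≠ z) : lerayDot (lsec z x) z ≠ 0 := by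
  rw [lerayDot_lsec]
  have h1 : ∀ i, (starRingEnd ℂ) (x i - z i) * (z i - x i) = -(Complex.normSq (x i - z i) : ℂ) := by
    intro i
    rw [show z i - x i = -(x i - z i) by ring, mul_neg, ← Complex.normSq_eq_conj_mul_self]
  rw [Finset.sum_congr rfl fun i _ => h1 i, Finset.sum_neg_distrib, neg_ne_zero,
    ← Complex.ofReal_sum, Complex.ofReal_ne_zero]
  intro h
  apply hx
  funext i
  have h2 := (Finset.sum_eq_zero_iff_of_nonneg fun i _ => Complex.normSq_nonneg (x i - z i)).mp h
    i (Finset.mem_univ i)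
  exact sub_eq_zero.mp (Complex.normSq_eq_zero.mp h2)

lemma lsec_ne_zero (x : Fin n → ℂ) (hx : x ≠ z) : lsec z x ≠ 0 := by
  intro h
  exact lerayDot_lsec_z z x hx (by rw [h, lerayDot_zero])

lemma continuous_lsec : Continuous (lsec z) := by
  unfold lsec
  refine continuous_pi fun i => ?_
  refine Fin.cases ?_ (fun j => ?_) i
  · simp only [Fin.cons_zero]
    exact (continuous_finset_sum _ fun i _ => ((RCLike.continuous_conj.comp
      ((continuous_apply i).sub continuous_const)).mul (continuous_apply i))).neg
  · simp only [Fin.cons_succ]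
    exact RCLike.continuous_conj.comp ((continuous_apply j).sub continuous_const)

/-- Normalized section. -/
noncomputable def nsec (x : Fin n → ℂ) : Fin (n+1) → ℂ :=
  (lerayDot (lsec z x) z)⁻¹ • lsec z x

lemma nsec_dot_z (x : Fin n → ℂ) (hx : x ≠ z) : lerayDot (nsec z x) z = 1 := by
  rw [nsec, lerayDot_smul, inv_mul_cancel₀ (lerayDot_lsec_z z x hx)]

lemma nsec_dot_self (x : Fin n → ℂ) : lerayDot (nsec z x) x = 0 := by
  rw [nsec, lerayDot_smul, lerayDot_lsec_self, mul_zero]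

lemma continuousOn_nsec : ContinuousOn (nsec z) {x : Fin n → ℂ | x ≠ z} := by
  refine ContinuousOn.smul (?_ : ContinuousOn (fun x => (lerayDot (lsec z x) z)⁻¹)
    {x : Fin n → ℂ | x ≠ z}) (continuous_lsec z).continuousOn
  exact (((continuous_lerayDot z).comp (continuous_lsec z)).continuousOn.inv₀
    fun x hx => lerayDot_lsec_z z x hx)

end LerayAux

open LerayAux in
/-- The projection `Q \ P_z → X \ {z}` is a (continuous, surjective) homotopy equivalence. -/
theorem leray_projection_homotopy_equiv (n : ℕ) (hn : 1 ≤ n) (X : Set (Fin n → ℂ))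
    (hXopen : IsOpen X) (hXconn : IsConnected X) (z : Fin n → ℂ) (hz : z ∈ X) :
    ∃ e : ContinuousMap.HomotopyEquiv
        (↥{p : ℙ ℂ (Fin (n + 1) → ℂ) × (Fin n → ℂ) |
            p.2 ∈ X ∧ lerayDot p.1.rep p.2 = 0 ∧ lerayDot p.1.rep z ≠ 0})
        (↥(X \ {z})),
      Function.Surjective ⇑e ∧ ∀ w, ((e w : Fin n → ℂ)) = w.1.2 := by
  set Q : Set (ℙ ℂ (Fin (n + 1) → ℂ) × (Fin n → ℂ)) :=
    {p | p.2 ∈ X ∧ lerayDot p.1.rep p.2 = 0 ∧ lerayDot p.1.rep z ≠ 0} with hQ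
  -- the second coordinate of a point of Q is ≠ z
  have hne : ∀ q : ↥Q, q.val.2 ≠ z := by
    rintro ⟨⟨p, x⟩, hX', h0, hnz⟩ h
    exact hnz (h ▸ h0)
  -- the projection map
  have fcont : Continuous fun q : ↥Q => (⟨q.val.2, q.2.1, hne q⟩ : ↥(X \ {z})) :=
    (continuous_snd.comp continuous_subtype_val).subtype_mk _
  set f : C(↥Q, ↥(X \ {z})) := ⟨_, fcont⟩ with hf
  -- the section
  have hgmem : ∀ x : ↥(X \ {z}),
      ((Projectivization.mk' ℂ ⟨lsec z x.val, lsec_ne_zero z x.val x.2.2⟩ :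
        ℙ ℂ (Fin (n+1) → ℂ)), x.val) ∈ Q := by
    rintro ⟨x, hxX, hxz⟩
    refine ⟨hxX, ?_, ?_⟩
    · rw [mk'_eq_mk, lerayDot_rep_mk_zero_iff]
      exact lerayDot_lsec_self z x
    · rw [mk'_eq_mk, Ne, lerayDot_rep_mk_zero_iff]
      exact lerayDot_lsec_z z x hxz
  have gcont : Continuous fun x : ↥(X \ {z}) =>
      (⟨((Projectivization.mk' ℂ ⟨lsec z x.val, lsec_ne_zero z x.val x.2.2⟩ :
        ℙ ℂ (Fin (n+1) → ℂ)), x.val), hgmem x⟩ : ↥Q) := by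
    refine Continuous.subtype_mk ?_ _
    refine Continuous.prodMk ?_ continuous_subtype_val
    exact continuous_mk'.comp
      (((continuous_lsec z).comp continuous_subtype_val).subtype_mk _)
  set g : C(↥(X \ {z}), ↥Q) := ⟨_, gcont⟩ with hg
  -- the homotopy vector
  set ξ : unitInterval × ↥Q → Fin (n+1) → ℂ := fun tq =>
    ((1 - tq.1.val : ℝ) : ℂ) • normC z tq.2.val.1 + ((tq.1.val : ℝ) : ℂ) • nsec z tq.2.val.2
    with hξ
  have hdz : ∀ tq, lerayDot (ξ tq) z = 1 := by
    rintro ⟨t, q⟩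
    rw [hξ]
    simp only [lerayDot_add, lerayDot_smul]
    rw [normC_dot_z z _ q.2.2.2, nsec_dot_z z _ (hne q)]
    push_cast
    ring
  have hξne : ∀ tq, ξ tq ≠ 0 := by
    intro tq h
    have := hdz tq
    rw [h, lerayDot_zero] at this
    exact one_ne_zero this.symm
  have hdx : ∀ tq, lerayDot (ξ tq) tq.2.val.2 = 0 := by
    rintro ⟨t, q⟩
    rw [hξ]
    simp only [lerayDot_add, lerayDot_smul]
    rw [normC_dot z _ _ q.2.2.1, nsec_dot_self z]
    ring
  have hHmem : ∀ tq, ((Projectivization.mk' ℂ ⟨ξ tq, hξne tq⟩ :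
      ℙ ℂ (Fin (n+1) → ℂ)), tq.2.val.2) ∈ Q := by
    intro tq
    refine ⟨tq.2.2.1, ?_, ?_⟩
    · rw [mk'_eq_mk, lerayDot_rep_mk_zero_iff]
      exact hdx tq
    · rw [mk'_eq_mk, Ne, lerayDot_rep_mk_zero_iff, hdz tq]
      exact one_ne_zero
  have hHcont : Continuous fun tq : unitInterval × ↥Q =>
      (⟨((Projectivization.mk' ℂ ⟨ξ tq, hξne tq⟩ : ℙ ℂ (Fin (n+1) → ℂ)), tq.2.val.2),
        hHmem tq⟩ : ↥Q) := by
    have hc1 : Continuous fun tq : unitInterval × ↥Q => normC z tq.2.val.1 := by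
      refine (continuousOn_normC z).comp_continuous ?_ fun tq => tq.2.2.2.2
      exact continuous_fst.comp (continuous_subtype_val.comp continuous_snd)
    have hc2 : Continuous fun tq : unitInterval × ↥Q => nsec z tq.2.val.2 := by
      refine (continuousOn_nsec z).comp_continuous ?_ fun tq => hne tq.2
      exact continuous_snd.comp (continuous_subtype_val.comp continuous_snd)
    have hct : Continuous fun tq : unitInterval × ↥Q => (tq.1.val : ℂ) :=
      Complex.continuous_ofReal.comp (continuous_subtype_val.comp continuous_fst)
    have hct' : Continuous fun tq : unitInterval × ↥Q => ((1 - tq.1.val : ℝ) : ℂ) :=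
      Complex.continuous_ofReal.comp
        ((continuous_const.sub (continuous_subtype_val.comp continuous_fst)))
    have hcξ : Continuous ξ := (hct'.smul hc1).add (hct.smul hc2)
    refine Continuous.subtype_mk ?_ _
    exact (continuous_mk'.comp (hcξ.subtype_mk _)).prodMk
      (continuous_snd.comp (continuous_subtype_val.comp continuous_snd))
  -- the homotopy from id to g ∘ f
  have hmk_smul : ∀ (v : Fin (n+1) → ℂ) (hv : v ≠ 0) (w : Fin (n+1) → ℂ) (hw : w ≠ 0)
      (c : ℂ), v = c • w → Projectivization.mk ℂ v hv = Projectivization.mk ℂ w hw := by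
    intro v hv w hw c h
    exact (mk_eq_mk_iff' ℂ v w hv hw).mpr ⟨c, h.symm⟩
  have hH0 : ∀ q : ↥Q, (⟨((Projectivization.mk' ℂ ⟨ξ (0, q), hξne (0, q)⟩ :
      ℙ ℂ (Fin (n+1) → ℂ)), q.val.2), hHmem (0, q)⟩ : ↥Q) = q := by
    intro q
    refine Subtype.ext ?_
    have h1 : (Projectivization.mk' ℂ ⟨ξ (0, q), hξne (0, q)⟩ : ℙ ℂ (Fin (n+1) → ℂ)) =
        q.val.1 := by
      rw [mk'_eq_mk]
      have hv : ξ (0, q) = (lerayDot q.val.1.rep z)⁻¹ • q.val.1.rep := by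
        rw [hξ]
        norm_num [normC]
      rw [hmk_smul _ _ q.val.1.rep q.val.1.rep_nonzero _ hv]
      exact mk_rep _
    show ((Projectivization.mk' ℂ ⟨ξ (0, q), hξne (0, q)⟩ :
      ℙ ℂ (Fin (n+1) → ℂ)), q.val.2) = q.val
    rw [h1]
  have hH1 : ∀ q : ↥Q, (⟨((Projectivization.mk' ℂ ⟨ξ (1, q), hξne (1, q)⟩ :
      ℙ ℂ (Fin (n+1) → ℂ)), q.val.2), hHmem (1, q)⟩ : ↥Q) = g (f q) := by
    intro q
    refine Subtype.ext ?_
    have h1 : (Projectivization.mk' ℂ ⟨ξ (1, q), hξne (1, q)⟩ : ℙ ℂ (Fin (n+1) → ℂ)) =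
        Projectivization.mk ℂ (lsec z q.val.2) (lsec_ne_zero z q.val.2 (hne q)) := by
      rw [mk'_eq_mk]
      have hv : ξ (1, q) = (lerayDot (lsec z q.val.2) z)⁻¹ • lsec z q.val.2 := by
        rw [hξ]
        norm_num [nsec]
      exact hmk_smul _ _ _ _ _ hv
    show ((Projectivization.mk' ℂ ⟨ξ (1, q), hξne (1, q)⟩ :
      ℙ ℂ (Fin (n+1) → ℂ)), q.val.2) = ((g (f q)).val.1, (g (f q)).val.2)
    rw [h1]
    rfl
  set H : ContinuousMap.Homotopy (ContinuousMap.id ↥Q) (g.comp f) :=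
    { toFun := fun tq => ⟨((Projectivization.mk' ℂ ⟨ξ tq, hξne tq⟩ :
        ℙ ℂ (Fin (n+1) → ℂ)), tq.2.val.2), hHmem tq⟩
      continuous_toFun := hHcont
      map_zero_left := hH0
      map_one_left := hH1 } with hH
  have hfg : f.comp g = ContinuousMap.id _ := by
    ext x
    rfl
  refine ⟨⟨f, g, ⟨H.symm⟩, ⟨(ContinuousMap.Homotopy.refl _).cast hfg.symm rfl⟩⟩, ?_, ?_⟩
  · intro y
    exact ⟨g y, Subtype.ext rfl⟩
  · intro w
    rfl
end

section
/- Let T be the set of points ([ξ₁:ξ₂], (x₁, x₂)) ∈ ℙ¹(ℂ) × ℂ² such that ξ₁³(x₁ − 1) + ξ₂³(x₂ − 2) + 2ξ₁²ξ₂ = 0. Then the inclusion map T ↪ ℙ¹(ℂ) × ℂ² is a homotopy equivalence. -/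
open LinearAlgebra.Projectivization Projectivization

/-- Example C (modified): `T = {([ξ₁:ξ₂],(x₁,x₂)) : ξ₁³(x₁−1) + ξ₂³(x₂−2) + 2ξ₁²ξ₂ = 0}`,
as a subset of `ℙ¹(ℂ) × ℂ²` (coordinates `ξ₁ = ξ 0`, `ξ₂ = ξ 1`). -/
noncomputable def exampleC_T : Set (ℙ ℂ (Fin 2 → ℂ) × (ℂ × ℂ)) :=
  {p | p.1.rep 0 ^ 3 * (p.2.1 - 1) + p.1.rep 1 ^ 3 * (p.2.2 - 2)
        + 2 * p.1.rep 0 ^ 2 * p.1.rep 1 = 0}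

noncomputable section ExC

namespace ExC

abbrev V' : Type := Fin 2 → ℂ

abbrev S : Type := { v : V' // v ≠ 0 }

def cj (z : ℂ) : ℂ := (starRingEnd ℂ) z

/-- The affine-linear expression defining `T`, as a function of a representative vector. -/
def EE (v : V') (x : ℂ × ℂ) : ℂ :=
  v 0 ^ 3 * (x.1 - 1) + v 1 ^ 3 * (x.2 - 2) + 2 * v 0 ^ 2 * v 1

/-- The (positive real, viewed in `ℂ`) squared norm of the coefficient vector. -/
def NN (v : V') : ℂ := v 0 ^ 3 * cj (v 0 ^ 3) + v 1 ^ 3 * cj (v 1 ^ 3)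

/-- The fiberwise straight-line retraction of `ℂ²` onto the affine line `{EE v · = 0}`,
at time `t`. -/
def rt (t : ℝ) (v : V') (x : ℂ × ℂ) : ℂ × ℂ :=
  (x.1 - t * (EE v x / NN v) * cj (v 0 ^ 3),
   x.2 - t * (EE v x / NN v) * cj (v 1 ^ 3))

lemma ne01 {v : V'} (hv : v ≠ 0) : v 0 ≠ 0 ∨ v 1 ≠ 0 := by
  by_contra h
  push_neg at h
  exact hv (funext fun i => by fin_cases i <;> simp [h.1, h.2])

lemma NN_ne {v : V'} (hv : v ≠ 0) : NN v ≠ 0 := by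
  have h : NN v = ((Complex.normSq (v 0) ^ 3 + Complex.normSq (v 1) ^ 3 : ℝ) : ℂ) := by
    simp only [NN, cj, map_pow]
    push_cast
    rw [← Complex.mul_conj, ← Complex.mul_conj]
    ring
  rw [h, Complex.ofReal_ne_zero]
  have h0 := Complex.normSq_nonneg (v 0)
  have h1 := Complex.normSq_nonneg (v 1)
  rcases ne01 hv with hne | hne
  · have := Complex.normSq_pos.mpr hne
    nlinarith [pow_pos this 3, pow_nonneg h1 3]
  · have := Complex.normSq_pos.mpr hne
    nlinarith [pow_pos this 3, pow_nonneg h0 3]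

lemma rt_smul (t : ℝ) {c : ℂ} (hc : c ≠ 0) {v : V'} (hv : v ≠ 0) (x : ℂ × ℂ) :
    rt t (c • v) x = rt t v x := by
  have hcv : ∀ i, (c • v) i = c * v i := fun i => rfl
  have hE : EE (c • v) x = c ^ 3 * EE v x := by
    simp only [EE, hcv]; ring
  have hN : NN (c • v) = (c ^ 3 * cj c ^ 3) * NN v := by
    simp only [NN, hcv, cj, map_mul, map_pow]; ring
  have hcj : (starRingEnd ℂ) c ≠ 0 := by
    simp only [ne_eq, map_eq_zero]; exact hc
  have hNv := NN_ne hv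
  unfold rt
  simp only [hE, hN, hcv, cj, map_mul, map_pow]
  rw [Prod.mk.injEq]
  refine ⟨?_, ?_⟩ <;> · field_simp [hc, hcj, hNv]

lemma rt_zero (v : V') (x : ℂ × ℂ) : rt 0 v x = x := by
  simp [rt]

lemma EE_rt_one {v : V'} (hv : v ≠ 0) (x : ℂ × ℂ) : EE v (rt 1 v x) = 0 := by
  have hNv := NN_ne hv
  unfold EE rt
  simp only [Complex.ofReal_one, one_mul]
  field_simp
  unfold EE NN
  ring

lemma rt_of_mem {v : V'} (h : EE v x = 0) (t : ℝ) : rt t v x = x := by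
  simp [rt, h]

lemma cont_rt : Continuous (fun p : ℝ × S × (ℂ × ℂ) => rt p.1 p.2.1.1 p.2.2) := by
  have hv : Continuous (fun p : ℝ × S × (ℂ × ℂ) => (p.2.1 : V')) :=
    continuous_subtype_val.comp (continuous_fst.comp continuous_snd)
  have h0 : Continuous (fun p : ℝ × S × (ℂ × ℂ) => (p.2.1 : V') 0) :=
    (continuous_apply 0).comp hv
  have h1 : Continuous (fun p : ℝ × S × (ℂ × ℂ) => (p.2.1 : V') 1) :=
    (continuous_apply 1).comp hv
  have hx1 : Continuous (fun p : ℝ × S × (ℂ × ℂ) => p.2.2.1) :=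
    continuous_fst.comp (continuous_snd.comp continuous_snd)
  have hx2 : Continuous (fun p : ℝ × S × (ℂ × ℂ) => p.2.2.2) :=
    continuous_snd.comp (continuous_snd.comp continuous_snd)
  have ht : Continuous (fun p : ℝ × S × (ℂ × ℂ) => (p.1 : ℂ)) :=
    Complex.continuous_ofReal.comp continuous_fst
  have hconj : Continuous (cj) := Complex.continuous_conj
  have hE : Continuous (fun p : ℝ × S × (ℂ × ℂ) => EE (p.2.1 : V') p.2.2) := by
    unfold EE
    continuity
  have hN : Continuous (fun p : ℝ × S × (ℂ × ℂ) => NN (p.2.1 : V')) := by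
    unfold NN
    continuity
  have hlam : Continuous (fun p : ℝ × S × (ℂ × ℂ) =>
      (p.1 : ℂ) * (EE (p.2.1 : V') p.2.2 / NN (p.2.1 : V'))) :=
    ht.mul (hE.div hN fun p => NN_ne p.2.1.2)
  unfold rt
  exact (hx1.sub (hlam.mul (hconj.comp (h0.pow 3)))).prodMk
    (hx2.sub (hlam.mul (hconj.comp (h1.pow 3))))

/-- The quotient map from nonzero vectors to the projective line. -/
def q (v : S) : ℙ ℂ V' := Projectivization.mk ℂ (v : V') v.2

lemma q_isOpenQuotientMap : IsOpenQuotientMap q := by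
  refine ⟨fun p => ⟨⟨p.rep, p.rep_nonzero⟩, p.mk_rep⟩, ?_, ?_⟩
  · exact continuous_quotient_mk'
  · intro U hU
    have hsc : ∀ c : ℂˣ, Continuous (fun v : S =>
        (⟨(c : ℂ) • (v : V'), smul_ne_zero c.ne_zero v.2⟩ : S)) := fun c =>
      (continuous_subtype_val.const_smul (c : ℂ)).subtype_mk _
    have key : q ⁻¹' (q '' U) =
        ⋃ c : ℂˣ, (fun v : S => (⟨(c : ℂ) • (v : V'), smul_ne_zero c.ne_zero v.2⟩ : S)) ⁻¹' U := by
      ext v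
      simp only [Set.mem_preimage, Set.mem_image, Set.mem_iUnion]
      constructor
      · rintro ⟨u, hu, huv⟩
        obtain ⟨c, hc⟩ := (mk_eq_mk_iff ℂ _ _ u.2 v.2).mp huv
        refine ⟨c, ?_⟩
        have : (⟨(c : ℂ) • (v : V'), smul_ne_zero c.ne_zero v.2⟩ : S) = u := by
          apply Subtype.ext
          simpa [Units.smul_def] using hc
        rw [this]; exact hu
      · rintro ⟨c, hc⟩
        refine ⟨_, hc, ?_⟩
        exact (mk_eq_mk_iff ℂ _ _ (smul_ne_zero c.ne_zero v.2) v.2).mpr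
          ⟨c, by simp [Units.smul_def]⟩
    have hpre : IsOpen (q ⁻¹' (q '' U)) := by
      rw [key]; exact isOpen_iUnion fun c => (hsc c).isOpen_preimage U hU
    exact isOpen_coinduced.mpr hpre

lemma rt_lift_cond (t : ℝ) : ∀ (a b : S) (c : ℂ), (a : V') = c • (b : V') →
    (fun x => rt t (a : V') x) = (fun x => rt t (b : V') x) := by
  intro a b c hab
  have hc : c ≠ 0 := by
    rintro rfl
    exact a.2 (by simpa using hab)
  funext x
  rw [hab]
  exact rt_smul t hc b.2 x

/-- The retraction, descended to the projective line. -/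
def Phi (t : ℝ) : ℙ ℂ V' → (ℂ × ℂ) → ℂ × ℂ :=
  Projectivization.lift (fun v : S => fun x => rt t (v : V') x) (rt_lift_cond t)

lemma Phi_mk (t : ℝ) (v : S) (x : ℂ × ℂ) : Phi t (q v) x = rt t (v : V') x := rfl

lemma Phi_rep (t : ℝ) (p : ℙ ℂ V') (x : ℂ × ℂ) : Phi t p x = rt t p.rep x := by
  conv_lhs => rw [← p.mk_rep]
  rfl

end ExC

end ExC

open ExC in
/-- The inclusion `T ↪ ℙ¹(ℂ) × ℂ²` is a homotopy equivalence. -/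
theorem exampleC_inclusion_homotopy_equiv :
    ∃ e : ContinuousMap.HomotopyEquiv ↥exampleC_T (ℙ ℂ (Fin 2 → ℂ) × (ℂ × ℂ)),
      ∀ w : ↥exampleC_T, e w = (w : ℙ ℂ (Fin 2 → ℂ) × (ℂ × ℂ)) := by
  classical
  set Y := ℙ ℂ (Fin 2 → ℂ) × (ℂ × ℂ)
  have hq := q_isOpenQuotientMap
  -- membership of the retracted point
  have hmem : ∀ y : Y, (y.1, Phi 1 y.1 y.2) ∈ exampleC_T := by
    intro y
    show EE y.1.rep (Phi 1 y.1 y.2) = 0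
    rw [Phi_rep]
    exact EE_rt_one y.1.rep_nonzero y.2
  -- the retraction as a continuous map
  have hcont1 : Continuous (fun y : Y => (y.1, Phi 1 y.1 y.2)) := by
    have hmap : IsOpenQuotientMap (Prod.map q (id : ℂ × ℂ → ℂ × ℂ)) :=
      hq.prodMap .id
    rw [← hmap.continuous_comp_iff]
    have : ((fun y : Y => (y.1, Phi 1 y.1 y.2)) ∘ Prod.map q id) =
        fun vx : S × (ℂ × ℂ) => ((q vx.1, rt 1 (vx.1 : V') vx.2) : Y) := by
      funext vx
      simp [Prod.map, Phi_mk]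
    rw [this]
    exact ((hq.continuous.comp continuous_fst)).prodMk
      (cont_rt.comp (continuous_const.prodMk continuous_id))
  let i : C(↥exampleC_T, Y) := ⟨Subtype.val, continuous_subtype_val⟩
  let r : C(Y, ↥exampleC_T) := ⟨fun y => ⟨(y.1, Phi 1 y.1 y.2), hmem y⟩,
    hcont1.subtype_mk _⟩
  -- r ∘ i = id
  have hri : r.comp i = ContinuousMap.id _ := by
    apply ContinuousMap.ext
    intro w
    apply Subtype.ext
    show ((w : Y).1, Phi 1 (w : Y).1 (w : Y).2) = (w : Y)
    have hw : EE (w : Y).1.rep (w : Y).2 = 0 := w.2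
    rw [Phi_rep, rt_of_mem hw]
  -- homotopy from id to i ∘ r
  have hH : Continuous (fun p : unitInterval × Y =>
      (((p.2.1, Phi (p.1 : ℝ) p.2.1 p.2.2)) : Y)) := by
    have hmap : IsOpenQuotientMap
        (Prod.map (id : unitInterval → unitInterval) (Prod.map q (id : ℂ × ℂ → ℂ × ℂ))) :=
      IsOpenQuotientMap.id.prodMap (hq.prodMap .id)
    rw [← hmap.continuous_comp_iff]
    have : ((fun p : unitInterval × Y => (((p.2.1, Phi (p.1 : ℝ) p.2.1 p.2.2)) : Y)) ∘
        Prod.map id (Prod.map q id)) =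
        fun p : unitInterval × S × (ℂ × ℂ) =>
          ((q p.2.1, rt (p.1 : ℝ) (p.2.1 : V') p.2.2) : Y) := by
      funext p
      simp [Prod.map, Phi_mk]
    rw [this]
    refine (hq.continuous.comp (continuous_fst.comp continuous_snd)).prodMk ?_
    exact cont_rt.comp
      (((continuous_subtype_val.comp continuous_fst)).prodMk continuous_snd)
  have hir : (i.comp r).Homotopic (ContinuousMap.id Y) := by
    refine ContinuousMap.Homotopic.symm ⟨⟨⟨fun p => (p.2.1, Phi (p.1 : ℝ) p.2.1 p.2.2), hH⟩,
      ?_, ?_⟩⟩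
    · intro y
      show ((y.1, Phi ((0 : unitInterval) : ℝ) y.1 y.2) : Y) = y
      rw [Phi_rep]
      simp [rt_zero]
    · intro y
      rfl
  refine ⟨⟨i, r, by rw [hri], hir⟩, fun w => rfl⟩
end

section
/- For every real ε with 0 < ε < 1, the iterated circle integral ∮_{|x₂|=ε} ( ∮_{|y₁|=ε} (x₂² + 1)/(x₂ · y₁ · (y₁ + 1)) dy₁ ) dx₂, where both circles are centred at 0 and traversed once counterclockwise, equals (2πi)² = −4π²; in particular it is nonzero. -/
open Real Complex

open Metric Set in
lemma circleIntegral_add_one_inv_eq_zero {ε : ℝ} (hε0 : 0 < ε) (hε1 : ε < 1) :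
    (∮ z in C((0 : ℂ), ε), (z + 1)⁻¹) = 0 := by
  refine circleIntegral_eq_zero_of_differentiable_on_off_countable hε0.le
    (countable_empty) ?_ ?_
  · apply ContinuousOn.inv₀
    · fun_prop
    · intro z hz
      simp only [mem_closedBall, Complex.dist_eq, sub_zero] at hz
      intro h
      have : ‖z‖ = 1 := by
        rw [show z = -1 by linear_combination h]; simp
      linarith
  · intro z hz
    simp only [mem_diff, mem_ball, Complex.dist_eq, sub_zero, mem_empty_iff_false,
      not_false_iff, and_true] at hz
    apply DifferentiableAt.inv
    · fun_prop
    · intro h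
      have : ‖z‖ = 1 := by
        rw [show z = -1 by linear_combination h]; simp
      linarith

open Metric Set in
lemma circleIntegral_id_eq_zero {ε : ℝ} (hε0 : 0 < ε) :
    (∮ z in C((0 : ℂ), ε), z) = 0 := by
  refine circleIntegral_eq_zero_of_differentiable_on_off_countable hε0.le
    (countable_empty) (continuousOn_id) ?_
  intro z _
  exact differentiableAt_id

open Metric Set in
lemma inner_integral_eq {ε : ℝ} (hε0 : 0 < ε) (hε1 : ε < 1) (x₂ : ℂ) (hx : x₂ ≠ 0) :
    (∮ y₁ in C((0 : ℂ), ε), (x₂ ^ 2 + 1) / (x₂ * y₁ * (y₁ + 1))) =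
      (x₂ ^ 2 + 1) / x₂ * (2 * (π : ℂ) * I) := by
  have hinv : CircleIntegrable (fun z : ℂ => z⁻¹) 0 ε := by
    have := circleIntegrable_sub_inv_iff (c := (0 : ℂ)) (w := 0) (R := ε)
    simp only [sub_zero] at this
    rw [this]
    right
    simp [abs_of_pos hε0, hε0.ne]
  have hinv1 : CircleIntegrable (fun z : ℂ => (z + 1)⁻¹) 0 ε := by
    apply ContinuousOn.circleIntegrable hε0.le
    apply ContinuousOn.inv₀
    · fun_prop
    · intro z hz
      simp only [mem_sphere_iff_norm, sub_zero] at hz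
      intro h
      have : ‖z‖ = 1 := by rw [show z = -1 by linear_combination h]; simp
      linarith
  have key : EqOn (fun y₁ : ℂ => (x₂ ^ 2 + 1) / (x₂ * y₁ * (y₁ + 1)))
      (fun y₁ : ℂ => (x₂ ^ 2 + 1) / x₂ * (y₁⁻¹ - (y₁ + 1)⁻¹)) (sphere 0 ε) := by
    intro y hy
    simp only [mem_sphere_iff_norm, sub_zero] at hy
    have hy0 : y ≠ 0 := by rintro rfl; simp at hy; linarith
    have hy1 : y + 1 ≠ 0 := by
      intro h
      have : ‖y‖ = 1 := by rw [show y = -1 by linear_combination h]; simp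
      linarith
    field_simp
    ring
  rw [circleIntegral.integral_congr hε0.le key]
  have : (∮ y₁ in C((0 : ℂ), ε), (x₂ ^ 2 + 1) / x₂ * (y₁⁻¹ - (y₁ + 1)⁻¹)) =
      (x₂ ^ 2 + 1) / x₂ * ∮ y₁ in C((0 : ℂ), ε), (y₁⁻¹ - (y₁ + 1)⁻¹) :=
    circleIntegral.integral_const_mul _ _ _ _
  rw [this, circleIntegral.integral_sub hinv hinv1, circleIntegral_add_one_inv_eq_zero hε0 hε1]
  have h0 : (∮ z in C((0 : ℂ), ε), z⁻¹) = 2 * (π : ℂ) * I := by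
    have := circleIntegral.integral_sub_center_inv (0 : ℂ) (R := ε) hε0.ne'
    simpa using this
  rw [h0, sub_zero]

/-- Example D: for `0 < ε < 1`, the iterated circle integral
`∮_{|x₂|=ε} ∮_{|y₁|=ε} (x₂²+1)/(x₂·y₁·(y₁+1)) dy₁ dx₂` equals `(2πi)² = −4π² ≠ 0`. -/
theorem exampleD_residue_integral_ne_zero (ε : ℝ) (hε0 : 0 < ε) (hε1 : ε < 1) :
    (∮ x₂ in C(0, ε), ∮ y₁ in C(0, ε), (x₂ ^ 2 + 1) / (x₂ * y₁ * (y₁ + 1))) =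
        (2 * (π : ℂ) * I) ^ 2 ∧
      (2 * (π : ℂ) * I) ^ 2 = -4 * (π : ℂ) ^ 2 ∧
      (∮ x₂ in C(0, ε), ∮ y₁ in C(0, ε), (x₂ ^ 2 + 1) / (x₂ * y₁ * (y₁ + 1))) ≠ 0 := by
  have hπ : (π : ℂ) ≠ 0 := by
    exact_mod_cast Real.pi_ne_zero
  have hsq : (2 * (π : ℂ) * I) ^ 2 = -4 * (π : ℂ) ^ 2 := by
    rw [mul_pow, mul_pow, I_sq]; ring
  have hmain : (∮ x₂ in C(0, ε), ∮ y₁ in C(0, ε), (x₂ ^ 2 + 1) / (x₂ * y₁ * (y₁ + 1))) =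
      (2 * (π : ℂ) * I) ^ 2 := by
    have key : Set.EqOn (fun x₂ : ℂ => ∮ y₁ in C((0:ℂ), ε), (x₂ ^ 2 + 1) / (x₂ * y₁ * (y₁ + 1)))
        (fun x₂ : ℂ => (2 * (π : ℂ) * I) * (x₂⁻¹ - -x₂)) (Metric.sphere 0 ε) := by
      intro x hx
      simp only [mem_sphere_iff_norm, sub_zero] at hx
      have hx0 : x ≠ 0 := by rintro rfl; simp at hx; linarith
      simp only
      rw [inner_integral_eq hε0 hε1 x hx0]
      field_simp
      ring
    rw [circleIntegral.integral_congr hε0.le key,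
      circleIntegral.integral_const_mul]
    have hinv : CircleIntegrable (fun z : ℂ => z⁻¹) 0 ε := by
      have := circleIntegrable_sub_inv_iff (c := (0 : ℂ)) (w := 0) (R := ε)
      simp only [sub_zero] at this
      rw [this]
      right
      simp [abs_of_pos hε0, hε0.ne]
    have hid : CircleIntegrable (fun z : ℂ => -z) 0 ε :=
      (ContinuousOn.circleIntegrable hε0.le (by fun_prop))
    rw [circleIntegral.integral_sub hinv hid]
    have h0 : (∮ z in C((0 : ℂ), ε), z⁻¹) = 2 * (π : ℂ) * I := by
      have := circleIntegral.integral_sub_center_inv (0 : ℂ) (R := ε) hε0.ne'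
      simpa using this
    have h1 : (∮ z in C((0 : ℂ), ε), -z) = 0 := by
      have := circleIntegral_id_eq_zero (ε := ε) hε0
      have hneg : (∮ z in C((0 : ℂ), ε), -z) = - ∮ z in C((0 : ℂ), ε), z := by
        have := circleIntegral.integral_const_mul (-1 : ℂ) (fun z => z) 0 ε
        simpa [neg_one_mul] using this
      rw [hneg, this, neg_zero]
    rw [h0, h1, sub_zero, sq]
  refine ⟨hmain, hsq, ?_⟩
  rw [hmain, hsq]
  intro h
  have hp2 : (π : ℂ) ^ 2 = 0 := by linear_combination (-1/4 : ℂ) * h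
  exact hπ (pow_eq_zero_iff (two_ne_zero) |>.mp hp2)
end

section
/- For all real r₁ > 0 and r₂ > 0, the iterated circle integral ∮_{|v|=r₂} ( ∮_{|u|=r₁} ((v − u)³ + 1)/(u·v) du ) dv, where both circles are centred at 0 and traversed once counterclockwise, equals (2πi)² = −4π²; in particular it is nonzero. -/
open Real Complex

lemma circle_ne_zero {R : ℝ} (hR : 0 < R) {u : ℂ} (hu : u ∈ Metric.sphere (0:ℂ) R) :
    u ≠ 0 := by
  simp only [Metric.mem_sphere, dist_zero_right] at hu
  intro h; rw [h] at hu; simp at hu; exact hR.ne' hu.symm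

lemma circleInt_add {f g : ℂ → ℂ} {c : ℂ} {R : ℝ} (hf : CircleIntegrable f c R)
    (hg : CircleIntegrable g c R) :
    (∮ z in C(c, R), f z + g z) = (∮ z in C(c, R), f z) + ∮ z in C(c, R), g z := by
  simp only [circleIntegral, smul_add, intervalIntegral.integral_add hf.out hg.out]

lemma key (R : ℝ) (hR : 0 < R) (a b c d : ℂ) :
    (∮ u in C(0, R), (a + b * u + c * u ^ 2 + d * u⁻¹)) = 2 * π * I * d := by
  have hne : ∀ u ∈ Metric.sphere (0:ℂ) R, u ≠ 0 := fun u hu => circle_ne_zero hR hu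
  have hpoly : CircleIntegrable (fun u : ℂ => a + b * u + c * u ^ 2) 0 R :=
    (by continuity : Continuous fun u : ℂ => a + b * u + c * u ^ 2).continuousOn.circleIntegrable
      hR.le
  have hinv : CircleIntegrable (fun u : ℂ => d * u⁻¹) 0 R := by
    refine (ContinuousOn.mul continuousOn_const ?_).circleIntegrable hR.le
    exact ContinuousOn.inv₀ continuousOn_id hne
  have hone : (∮ _u in C(0, R), (1:ℂ)) = 0 := by
    simpa using circleIntegral.integral_sub_zpow_of_ne (n := 0) (by decide) (0:ℂ) 0 R
  have h0 : (∮ _u in C(0, R), a) = 0 := by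
    have := circleIntegral.integral_const_mul a (fun _ => (1:ℂ)) 0 R
    simpa [hone] using this
  have h1 : (∮ u in C(0, R), u) = 0 := by
    have := circleIntegral.integral_sub_zpow_of_ne (n := 1) (by decide) (0:ℂ) 0 R
    simpa using this
  have h2 : (∮ u in C(0, R), u ^ 2) = 0 := by
    have := circleIntegral.integral_sub_zpow_of_ne (n := 2) (by decide) (0:ℂ) 0 R
    simpa using this
  have hinv' : (∮ u in C(0, R), u⁻¹) = 2 * π * I := by
    simpa using circleIntegral.integral_sub_center_inv (0:ℂ) hR.ne'
  have h1' : CircleIntegrable (fun u : ℂ => b * u) 0 R :=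
    (by continuity : Continuous fun u : ℂ => b * u).continuousOn.circleIntegrable hR.le
  have h2' : CircleIntegrable (fun u : ℂ => c * u ^ 2) 0 R :=
    (by continuity : Continuous fun u : ℂ => c * u ^ 2).continuousOn.circleIntegrable hR.le
  have h0' : CircleIntegrable (fun _u : ℂ => a) 0 R := circleIntegrable_const a 0 R
  have h01 : CircleIntegrable (fun u : ℂ => a + b * u) 0 R :=
    (by continuity : Continuous fun u : ℂ => a + b * u).continuousOn.circleIntegrable hR.le
  rw [circleInt_add hpoly hinv, circleInt_add h01 h2',
    circleInt_add h0' h1', h0, circleIntegral.integral_const_mul,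
    circleIntegral.integral_const_mul, circleIntegral.integral_const_mul, h1, h2, hinv']
  ring

lemma inner_eval (r₁ : ℝ) (hr : 0 < r₁) {v : ℂ} (hv : v ≠ 0) :
    (∮ u in C(0, r₁), ((v - u) ^ 3 + 1) / (u * v)) = 2 * π * I * ((v ^ 3 + 1) / v) := by
  have : (∮ u in C(0, r₁), ((v - u) ^ 3 + 1) / (u * v)) =
      ∮ u in C(0, r₁), ((-3 * v) + 3 * u + (-(1 / v)) * u ^ 2 + ((v ^ 3 + 1) / v) * u⁻¹) := by
    refine circleIntegral.integral_congr hr.le fun u hu => ?_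
    have hu0 : u ≠ 0 := circle_ne_zero hr hu
    field_simp
    ring
  rw [this, key r₁ hr]

/-- Example E: for all `r₁, r₂ > 0`, the iterated circle integral
`∮_{|v|=r₂} ∮_{|u|=r₁} ((v−u)³+1)/(uv) du dv` equals `(2πi)² = −4π² ≠ 0`. -/
theorem exampleE_residue_integral_ne_zero (r₁ r₂ : ℝ) (h₁ : 0 < r₁) (h₂ : 0 < r₂) :
    (∮ v in C(0, r₂), ∮ u in C(0, r₁), ((v - u) ^ 3 + 1) / (u * v)) =
        (2 * (π : ℂ) * I) ^ 2 ∧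
      (2 * (π : ℂ) * I) ^ 2 = -4 * (π : ℂ) ^ 2 ∧
      (∮ v in C(0, r₂), ∮ u in C(0, r₁), ((v - u) ^ 3 + 1) / (u * v)) ≠ 0 := by
  have hmain : (∮ v in C(0, r₂), ∮ u in C(0, r₁), ((v - u) ^ 3 + 1) / (u * v)) =
      (2 * (π : ℂ) * I) ^ 2 := by
    have : (∮ v in C(0, r₂), ∮ u in C(0, r₁), ((v - u) ^ 3 + 1) / (u * v)) =
        ∮ v in C(0, r₂), ((0:ℂ) + 0 * v + (2 * π * I) * v ^ 2 + (2 * π * I) * v⁻¹) := by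
      refine circleIntegral.integral_congr h₂.le fun v hv => ?_
      have hv0 : v ≠ 0 := circle_ne_zero h₂ hv
      rw [inner_eval r₁ h₁ hv0]
      field_simp
      ring
    rw [this, key r₂ h₂]
    ring
  have hsq : (2 * (π : ℂ) * I) ^ 2 = -4 * (π : ℂ) ^ 2 := by
    rw [mul_pow, mul_pow, I_sq]; ring
  refine ⟨hmain, hsq, ?_⟩
  rw [hmain, hsq]
  have hpi : (π : ℂ) ≠ 0 := Complex.ofReal_ne_zero.2 Real.pi_ne_zero
  exact mul_ne_zero (by norm_num) (pow_ne_zero 2 hpi)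
end
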